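/- arXiv:1407.1822 — 2 statements merged into one kernel-verified Lean document; each statement's English description precedes it below -/
import Mathlib

section
/- Let a < 0 and let f : (0,1) → ℝ be continuously differentiable. Fix ε ∈ (0,1) and assume that x ↦ f(x)/√x and x ↦ √x·√(x−a)·f′(x) are Lebesgue integrable on (0, 1−ε). Then for every natural number N: ∫_0^{1−ε} x^N·f(x)/√(x·(x−a)) dx = (a/4)^N·C(2N,N) · ( ∫_0^{1−ε} f(x)/√(x·(x−a)) dx + Σ_{i=1}^{N} ( (4/a)^i / (i·C(2i,i)) ) · ( √(1−a−ε)·(1−ε)^{i−1/2}·f(1−ε) − ∫_0^{1−ε} x^i·√((x−a)/x)·f′(x) dx ) ). -/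
open Set MeasureTheory Filter Topology

private lemma aux_pow_pred (M : ℕ) (x : ℝ) : (M:ℝ) * x^(M-1) * x = (M:ℝ) * x^M := by
  cases M with
  | zero => simp
  | succ n => push_cast; ring

private lemma aux_deriv (a : ℝ) (ha : a < 0) (f : ℝ → ℝ) (M : ℕ) (x : ℝ) (hx0 : 0 < x)
    (hfd : DifferentiableAt ℝ f x) :
    HasDerivAt (fun y => y^M * Real.sqrt (y*(y-a)) * f y)
      ((((M:ℝ)+1) * x^(M+1) - a*((M:ℝ)+1/2)*x^M) * f x / Real.sqrt (x*(x-a))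
        + x^M * Real.sqrt (x*(x-a)) * deriv f x) x := by
  have hxa : 0 < x - a := by linarith
  have hprod : 0 < x*(x-a) := mul_pos hx0 hxa
  have hs0 : Real.sqrt (x*(x-a)) ≠ 0 := Real.sqrt_ne_zero'.mpr hprod
  have hs2 : Real.sqrt (x*(x-a)) * Real.sqrt (x*(x-a)) = x*(x-a) :=
    Real.mul_self_sqrt hprod.le
  have h1 : HasDerivAt (fun y : ℝ => y*(y-a)) (2*x-a) x := by
    have : HasDerivAt (fun y : ℝ => y*(y-a)) _ x := (hasDerivAt_id x).mul ((hasDerivAt_id x).sub_const a)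
    convert this using 1
    simp only [id_eq]; ring
  have h2 : HasDerivAt (fun y : ℝ => Real.sqrt (y*(y-a)))
      (1/(2*Real.sqrt (x*(x-a))) * (2*x-a)) x :=
    (Real.hasDerivAt_sqrt hprod.ne').comp x h1
  have h3 : HasDerivAt (fun y => y^M * Real.sqrt (y*(y-a)) * f y) _ x :=
    ((hasDerivAt_pow M x).mul h2).mul hfd.hasDerivAt
  convert h3 using 1
  have hM := aux_pow_pred M x
  simp only [Pi.mul_apply]
  field_simp
  rw [Real.sq_sqrt hprod.le]
  linear_combination (-(2*(x-a)*f x)) * hM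



/-- Lemma 6.3 (Transform3): for `a < 0`, `f` continuously differentiable on
`(0,1)`, `ε ∈ (0,1)` with the stated integrability, and every `N ∈ ℕ`,
`∫_0^{1-ε} x^N f(x)/√(x(x-a)) dx = (a/4)^N·C(2N,N) ·
  ( ∫_0^{1-ε} f(x)/√(x(x-a)) dx
    + Σ_{i=1}^N ((4/a)^i/(i·C(2i,i)))·( √(1-a-ε)·(1-ε)^{i-1/2}·f(1-ε)
        - ∫_0^{1-ε} x^i·√((x-a)/x)·f'(x) dx ) )`. -/
theorem stmt_15 (a : ℝ) (ha : a < 0) (f : ℝ → ℝ)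
    (hdiff : ∀ t ∈ Set.Ioo (0 : ℝ) 1, DifferentiableAt ℝ f t)
    (hcont : ContinuousOn (deriv f) (Set.Ioo 0 1))
    (ε : ℝ) (hε0 : 0 < ε) (hε1 : ε < 1)
    (hint1 : MeasureTheory.IntegrableOn
      (fun x => f x / Real.sqrt x) (Set.Ioo 0 (1 - ε)))
    (hint2 : MeasureTheory.IntegrableOn
      (fun x => Real.sqrt x * Real.sqrt (x - a) * deriv f x) (Set.Ioo 0 (1 - ε))) :
    ∀ N : ℕ,
      (∫ x in (0 : ℝ)..(1 - ε), x ^ N * f x / Real.sqrt (x * (x - a))) =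
        (a / 4) ^ N * (Nat.choose (2 * N) N : ℝ) *
          ((∫ x in (0 : ℝ)..(1 - ε), f x / Real.sqrt (x * (x - a))) +
            ∑ i ∈ Finset.Icc 1 N,
              ((4 / a) ^ i / ((i : ℝ) * (Nat.choose (2 * i) i : ℝ))) *
                (Real.sqrt (1 - a - ε) * (1 - ε) ^ ((i : ℝ) - 1 / 2) * f (1 - ε) -
                  ∫ x in (0 : ℝ)..(1 - ε),
                    x ^ i * Real.sqrt ((x - a) / x) * deriv f x)) := by
  set b : ℝ := 1 - ε with hb
  have hb0 : 0 < b := by simp only [hb]; linarith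
  have hb1 : b < 1 := by simp only [hb]; linarith
  have hsub : Ioo (0:ℝ) b ⊆ Ioo 0 1 := Ioo_subset_Ioo le_rfl hb1.le
  have hmemb : b ∈ Ioo (0:ℝ) 1 := ⟨hb0, hb1⟩
  have hfc : ContinuousOn f (Ioo 0 1) := fun x hx =>
    (hdiff x hx).continuousAt.continuousWithinAt
  have hscont : Continuous (fun x : ℝ => Real.sqrt (x*(x-a))) :=
    Real.continuous_sqrt.comp (continuous_id.mul (continuous_id.sub continuous_const))
  -- integrability of x^k f x / sqrt (x(x-a))
  have hIA : ∀ k : ℕ, IntegrableOn (fun x => x^k * f x / Real.sqrt (x*(x-a))) (Ioo 0 b) := by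
    intro k
    have hm : AEStronglyMeasurable (fun x => x^k * f x / Real.sqrt (x*(x-a)))
        (volume.restrict (Ioo 0 b)) := by
      apply ContinuousOn.aestronglyMeasurable _ measurableSet_Ioo
      apply ContinuousOn.div
      · exact (continuousOn_pow k).mul (hfc.mono hsub)
      · exact hscont.continuousOn
      · intro x hx
        exact Real.sqrt_ne_zero'.mpr (mul_pos hx.1 (by linarith [hx.1]))
    refine Integrable.mono (hint1.const_mul ((Real.sqrt (-a))⁻¹)) hm ?_
    refine (ae_restrict_iff' measurableSet_Ioo).mpr (ae_of_all _ ?_)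
    intro x hx
    have hx0 : 0 < x := hx.1
    have hxa : 0 < x - a := by linarith
    have h1 : Real.sqrt (x*(x-a)) = Real.sqrt x * Real.sqrt (x-a) := Real.sqrt_mul hx0.le _
    have e1 : |x^k * f x / (Real.sqrt x * Real.sqrt (x-a))|
        = x^k * |f x| / (Real.sqrt x * Real.sqrt (x-a)) := by
      rw [abs_div, abs_mul, abs_of_nonneg (pow_nonneg hx0.le k),
        abs_of_nonneg (mul_nonneg (Real.sqrt_nonneg x) (Real.sqrt_nonneg (x-a)))]
    have e2 : |(Real.sqrt (-a))⁻¹ * (f x / Real.sqrt x)|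
        = (Real.sqrt (-a))⁻¹ * (|f x| / Real.sqrt x) := by
      rw [abs_mul, abs_div, abs_of_nonneg (inv_nonneg.mpr (Real.sqrt_nonneg (-a))),
        abs_of_nonneg (Real.sqrt_nonneg x)]
    rw [Real.norm_eq_abs, Real.norm_eq_abs, h1, e1, e2]
    calc x^k * |f x| / (Real.sqrt x * Real.sqrt (x-a))
        ≤ 1 * |f x| / (Real.sqrt x * Real.sqrt (-a)) := by
          apply div_le_div₀ (by positivity)
          · exact mul_le_mul_of_nonneg_right (pow_le_one₀ hx0.le (by linarith [hx.2]))
              (abs_nonneg _)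
          · have : (0:ℝ) < Real.sqrt (-a) := Real.sqrt_pos.mpr (by linarith)
            positivity
          · exact mul_le_mul_of_nonneg_left (Real.sqrt_le_sqrt (by linarith))
              (Real.sqrt_nonneg x)
      _ = (Real.sqrt (-a))⁻¹ * (|f x| / Real.sqrt x) := by
          rw [one_mul]; field_simp
  -- integrability of x^k sqrt(x(x-a)) f'(x)
  have hIB : ∀ k : ℕ, IntegrableOn (fun x => x^k * Real.sqrt (x*(x-a)) * deriv f x)
      (Ioo 0 b) := by
    intro k
    have hm : AEStronglyMeasurable (fun x => x^k * Real.sqrt (x*(x-a)) * deriv f x)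
        (volume.restrict (Ioo 0 b)) := by
      apply ContinuousOn.aestronglyMeasurable _ measurableSet_Ioo
      exact ((continuousOn_pow k).mul hscont.continuousOn).mul (hcont.mono hsub)
    refine Integrable.mono hint2 hm ?_
    refine (ae_restrict_iff' measurableSet_Ioo).mpr (ae_of_all _ ?_)
    intro x hx
    have hx0 : 0 < x := hx.1
    have hxa : 0 < x - a := by linarith
    have h1 : Real.sqrt (x*(x-a)) = Real.sqrt x * Real.sqrt (x-a) := Real.sqrt_mul hx0.le _
    have e1 : |x^k * (Real.sqrt x * Real.sqrt (x-a)) * deriv f x|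
        = x^k * (Real.sqrt x * Real.sqrt (x-a)) * |deriv f x| := by
      rw [abs_mul, abs_mul, abs_of_nonneg (pow_nonneg hx0.le k),
        abs_of_nonneg (mul_nonneg (Real.sqrt_nonneg x) (Real.sqrt_nonneg (x-a)))]
    have e2 : |Real.sqrt x * Real.sqrt (x-a) * deriv f x|
        = Real.sqrt x * Real.sqrt (x-a) * |deriv f x| := by
      rw [abs_mul, abs_of_nonneg (mul_nonneg (Real.sqrt_nonneg x) (Real.sqrt_nonneg (x-a)))]
    rw [Real.norm_eq_abs, Real.norm_eq_abs, h1, e1, e2]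
    calc x^k * (Real.sqrt x * Real.sqrt (x-a)) * |deriv f x|
        ≤ 1 * (Real.sqrt x * Real.sqrt (x-a)) * |deriv f x| := by
          gcongr
          exact pow_le_one₀ hx0.le (by linarith [hx.2])
      _ = Real.sqrt x * Real.sqrt (x-a) * |deriv f x| := by ring
  -- the fundamental identity
  have hkey : ∀ M : ℕ,
      ((M:ℝ)+1) * (∫ x in Ioo (0:ℝ) b, x^(M+1) * f x / Real.sqrt (x*(x-a)))
        = a*((M:ℝ)+1/2) * (∫ x in Ioo (0:ℝ) b, x^M * f x / Real.sqrt (x*(x-a)))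
          + b^M * Real.sqrt (b*(b-a)) * f b
          - ∫ x in Ioo (0:ℝ) b, x^M * Real.sqrt (x*(x-a)) * deriv f x := by
    intro M
    set F : ℝ → ℝ := fun y => y^M * Real.sqrt (y*(y-a)) * f y with hF
    set G : ℝ → ℝ := fun x => (((M:ℝ)+1) * x^(M+1) - a*((M:ℝ)+1/2)*x^M) * f x
        / Real.sqrt (x*(x-a)) + x^M * Real.sqrt (x*(x-a)) * deriv f x with hG
    have hGsplit : G = fun x => ((M:ℝ)+1) * (x^(M+1) * f x / Real.sqrt (x*(x-a)))
        - a*((M:ℝ)+1/2) * (x^M * f x / Real.sqrt (x*(x-a)))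
        + x^M * Real.sqrt (x*(x-a)) * deriv f x := by
      funext x; rw [hG]; ring
    have hGint : IntegrableOn G (Ioo 0 b) := by
      rw [hGsplit]
      exact (((hIA (M+1)).const_mul _).sub ((hIA M).const_mul _)).add (hIB M)
    have hGIoc : IntegrableOn G (Ioc 0 b) := (integrableOn_Ioc_iff_integrableOn_Ioo).mpr hGint
    have hFd : ∀ x ∈ Ioc (0:ℝ) b, HasDerivAt F (G x) x := by
      intro x hx
      exact aux_deriv a ha f M x hx.1 (hdiff x ⟨hx.1, lt_of_le_of_lt hx.2 hb1⟩)
    -- primitive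
    set Φ : ℝ → ℝ := fun c => ∫ x in c..b, G x with hΦ
    have hΦcont : ContinuousOn Φ (Icc 0 b) := by
      have h := intervalIntegral.continuousOn_primitive_interval_left
        (f := G) (b := b) (a := (0:ℝ)) (μ := volume)
        (by rw [uIcc_of_le hb0.le]; exact (integrableOn_Icc_iff_integrableOn_Ioc).mpr hGIoc)
      rwa [uIcc_of_le hb0.le] at h
    have hFc : ∀ c ∈ Ioo (0:ℝ) b, F c = F b - Φ c := by
      intro c hc
      have hd : ∀ x ∈ uIcc c b, HasDerivAt F (G x) x := by
        intro x hx
        rw [uIcc_of_le hc.2.le] at hx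
        exact hFd x ⟨lt_of_lt_of_le hc.1 hx.1, hx.2⟩
      have hi : IntervalIntegrable G volume c b :=
        (intervalIntegrable_iff_integrableOn_Ioc_of_le hc.2.le).mpr
          (hGIoc.mono_set (Ioc_subset_Ioc hc.1.le le_rfl))
      have := intervalIntegral.integral_eq_sub_of_hasDerivAt hd hi
      rw [hΦ]
      simp only
      rw [this]
      ring
    have htend : Tendsto F (𝓝[>] (0:ℝ)) (𝓝 (F b - Φ 0)) := by
      have h1 : Tendsto Φ (𝓝[Ioo 0 b] (0:ℝ)) (𝓝 (Φ 0)) :=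
        ((hΦcont 0 (left_mem_Icc.mpr hb0.le)).mono_left
          (nhdsWithin_mono 0 Ioo_subset_Icc_self))
      have h2 : Tendsto (fun c => F b - Φ c) (𝓝[Ioo 0 b] (0:ℝ)) (𝓝 (F b - Φ 0)) :=
        tendsto_const_nhds.sub h1
      have h3 : Tendsto F (𝓝[Ioo 0 b] (0:ℝ)) (𝓝 (F b - Φ 0)) := by
        refine h2.congr' ?_
        filter_upwards [self_mem_nhdsWithin] with c hc
        exact (hFc c hc).symm
      rwa [nhdsWithin_Ioo_eq_nhdsGT hb0] at h3
    -- the limit is zero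
    have hL0 : F b - Φ 0 = 0 := by
      by_contra hL0
      set L : ℝ := F b - Φ 0 with hLdef
      have hLpos : 0 < |L| := abs_pos.mpr hL0
      have hsq : (0:ℝ) < Real.sqrt (1-a) := Real.sqrt_pos.mpr (by linarith)
      set c : ℝ := |L| / (2 * Real.sqrt (1-a)) with hc
      have hc0 : 0 < c := by positivity
      have hev : ∀ᶠ x in 𝓝[>] (0:ℝ), c * x⁻¹ ≤ |f x / Real.sqrt x| := by
        have h5 : ∀ᶠ x in 𝓝[>] (0:ℝ), |L|/2 < |F x| :=
          (htend.abs).eventually (eventually_gt_nhds (by linarith))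
        have h6 : Ioo (0:ℝ) (min b 1) ∈ 𝓝[>] (0:ℝ) :=
          Ioo_mem_nhdsGT_of_mem ⟨le_rfl, lt_min hb0 one_pos⟩
        filter_upwards [h5, h6] with x hFx hx
        have hx0 : 0 < x := hx.1
        have hx1 : x < 1 := lt_of_lt_of_le hx.2 (min_le_right _ _)
        have hxa : 0 < x - a := by linarith
        have hsplit : Real.sqrt (x*(x-a)) = Real.sqrt x * Real.sqrt (x-a) :=
          Real.sqrt_mul hx0.le _
        have hden : x^M * Real.sqrt (x*(x-a)) * Real.sqrt x
            = x^(M+1) * Real.sqrt (x-a) := by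
          rw [hsplit]
          have : Real.sqrt x * Real.sqrt x = x := Real.mul_self_sqrt hx0.le
          calc x^M * (Real.sqrt x * Real.sqrt (x-a)) * Real.sqrt x
              = x^M * (Real.sqrt x * Real.sqrt x) * Real.sqrt (x-a) := by ring
            _ = x^(M+1) * Real.sqrt (x-a) := by rw [this]; ring
        have hdenne : x^M * Real.sqrt (x*(x-a)) ≠ 0 := by
          have : 0 < Real.sqrt (x*(x-a)) := Real.sqrt_pos.mpr (mul_pos hx0 hxa)
          positivity
        have hfx : f x / Real.sqrt x = F x / (x^(M+1) * Real.sqrt (x-a)) := by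
          rw [← hden]
          show f x / Real.sqrt x
            = x^M * Real.sqrt (x*(x-a)) * f x / (x^M * Real.sqrt (x*(x-a)) * Real.sqrt x)
          exact (mul_div_mul_left (f x) (Real.sqrt x) hdenne).symm
        rw [hfx, abs_div]
        have habs : |x^(M+1) * Real.sqrt (x-a)| = x^(M+1) * Real.sqrt (x-a) := by
          have : (0:ℝ) ≤ x^(M+1) * Real.sqrt (x-a) := by positivity
          exact abs_of_nonneg this
        rw [habs]
        have hb1' : x^(M+1) * Real.sqrt (x-a) ≤ x * Real.sqrt (1-a) := by
          have h7 : x^(M+1) ≤ x := by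
            calc x^(M+1) = x^M * x := by ring
              _ ≤ 1 * x := by
                  exact mul_le_mul_of_nonneg_right (pow_le_one₀ hx0.le hx1.le) hx0.le
              _ = x := one_mul x
          exact mul_le_mul h7 (Real.sqrt_le_sqrt (by linarith)) (Real.sqrt_nonneg _)
            hx0.le
        calc c * x⁻¹ = (|L|/2) / (x * Real.sqrt (1-a)) := by
              rw [hc]; field_simp
          _ ≤ |F x| / (x^(M+1) * Real.sqrt (x-a)) := by
              apply div_le_div₀ (abs_nonneg _) (by linarith) (by positivity) hb1'
      rw [Filter.eventually_iff, mem_nhdsGT_iff_exists_Ioo_subset] at hev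
      obtain ⟨u, hu, husub⟩ := hev
      set δ : ℝ := min u b with hδdef
      have hδ0 : 0 < δ := lt_min hu hb0
      have hIc : IntegrableOn (fun x => c * x⁻¹) (Ioo 0 δ) := by
        refine Integrable.mono (hint1.mono_set (Ioo_subset_Ioo le_rfl (min_le_right _ _)))
          ((measurable_const.mul measurable_inv).aestronglyMeasurable) ?_
        refine (ae_restrict_iff' measurableSet_Ioo).mpr (ae_of_all _ ?_)
        intro x hx
        have hx0 : 0 < x := hx.1
        have hxu : x ∈ Ioo (0:ℝ) u := ⟨hx0, lt_of_lt_of_le hx.2 (min_le_left _ _)⟩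
        have := husub hxu
        rw [Real.norm_eq_abs, Real.norm_eq_abs, abs_of_nonneg (by positivity : (0:ℝ) ≤ c * x⁻¹)]
        exact this
      have hIinv : IntegrableOn (fun x : ℝ => x⁻¹) (Ioo 0 δ) := by
        have h8 := hIc.const_mul c⁻¹
        refine h8.congr (ae_of_all _ ?_)
        intro x
        simp only
        field_simp
      have hIrpow : IntegrableOn (fun x : ℝ => x ^ (-1:ℝ)) (Ioo 0 δ) := by
        refine hIinv.congr_fun ?_ measurableSet_Ioo
        intro x hx
        exact (Real.rpow_neg_one x).symm
      have := (intervalIntegral.integrableOn_Ioo_rpow_iff hδ0).mp hIrpow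
      linarith
    -- conclude
    have hIoo : ∫ x in Ioo (0:ℝ) b, G x = F b := by
      have h9 : Φ 0 = ∫ x in Ioo (0:ℝ) b, G x := by
        rw [hΦ]
        simp only
        rw [intervalIntegral.integral_of_le hb0.le, integral_Ioc_eq_integral_Ioo]
      rw [← h9]
      linarith
    have hA1 : IntegrableOn
        (fun x => ((M:ℝ)+1) * (x^(M+1) * f x / Real.sqrt (x*(x-a)))) (Ioo 0 b) :=
      (hIA (M+1)).const_mul _
    have hA0 : IntegrableOn
        (fun x => a*((M:ℝ)+1/2) * (x^M * f x / Real.sqrt (x*(x-a)))) (Ioo 0 b) :=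
      (hIA M).const_mul _
    have hA10 : IntegrableOn
        (fun x => ((M:ℝ)+1) * (x^(M+1) * f x / Real.sqrt (x*(x-a)))
          - a*((M:ℝ)+1/2) * (x^M * f x / Real.sqrt (x*(x-a)))) (Ioo 0 b) :=
      hA1.sub hA0
    have hsplit2 : ∫ x in Ioo (0:ℝ) b, G x
        = ((M:ℝ)+1) * (∫ x in Ioo (0:ℝ) b, x^(M+1) * f x / Real.sqrt (x*(x-a)))
          - a*((M:ℝ)+1/2) * (∫ x in Ioo (0:ℝ) b, x^M * f x / Real.sqrt (x*(x-a)))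
          + ∫ x in Ioo (0:ℝ) b, x^M * Real.sqrt (x*(x-a)) * deriv f x := by
      rw [hGsplit, integral_add hA10 (hIB M), integral_sub hA1 hA0,
        integral_const_mul, integral_const_mul]
    rw [hsplit2] at hIoo
    have hFb : F b = b^M * Real.sqrt (b*(b-a)) * f b := rfl
    rw [hFb] at hIoo
    linarith
  -- conversion between interval and Ioo integrals
  have hconv : ∀ g : ℝ → ℝ, (∫ x in (0:ℝ)..b, g x) = ∫ x in Ioo (0:ℝ) b, g x := by
    intro g
    rw [intervalIntegral.integral_of_le hb0.le, integral_Ioc_eq_integral_Ioo]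
  have hQconv : ∀ M : ℕ, (∫ x in Ioo (0:ℝ) b, x^(M+1) * Real.sqrt ((x-a)/x) * deriv f x)
      = ∫ x in Ioo (0:ℝ) b, x^M * Real.sqrt (x*(x-a)) * deriv f x := by
    intro M
    apply setIntegral_congr_fun measurableSet_Ioo
    intro x hx
    have hx0 : 0 < x := hx.1
    have hxa : 0 < x - a := by linarith
    have h1 : Real.sqrt ((x-a)/x) = Real.sqrt (x-a) * (Real.sqrt x)⁻¹ := by
      rw [div_eq_mul_inv, Real.sqrt_mul hxa.le, Real.sqrt_inv]
    have hsx : Real.sqrt x ≠ 0 := Real.sqrt_ne_zero'.mpr hx0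
    have hxx : Real.sqrt x * Real.sqrt x = x := Real.mul_self_sqrt hx0.le
    have h2 : Real.sqrt (x*(x-a)) = Real.sqrt x * Real.sqrt (x-a) := Real.sqrt_mul hx0.le _
    simp only
    rw [h1, h2, pow_succ]
    have hds : x * (Real.sqrt x)⁻¹ = Real.sqrt x := by
      rw [← div_eq_mul_inv]; exact Real.div_sqrt
    linear_combination (x^M * Real.sqrt (x-a) * deriv f x) * hds
  have hbound : ∀ M : ℕ, Real.sqrt (1-a-ε) * b ^ ((↑(M+1):ℝ) - 1/2) * f b
      = b^M * Real.sqrt (b*(b-a)) * f b := by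
    intro M
    have e1 : Real.sqrt (1-a-ε) = Real.sqrt (b-a) := by congr 1; rw [hb]; ring
    have e2 : b ^ ((↑(M+1):ℝ) - 1/2) = b^M * Real.sqrt b := by
      rw [Real.sqrt_eq_rpow, ← Real.rpow_natCast b M, ← Real.rpow_add hb0]
      congr 1
      push_cast
      ring
    have e3 : Real.sqrt (b*(b-a)) = Real.sqrt b * Real.sqrt (b-a) := Real.sqrt_mul hb0.le _
    rw [e1, e2, e3]; ring
  have hrec : ∀ M : ℕ,
      (∫ x in (0:ℝ)..b, x^(M+1) * f x / Real.sqrt (x*(x-a)))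
        = a*(2*(M:ℝ)+1)/(2*(M:ℝ)+2) * (∫ x in (0:ℝ)..b, x^M * f x / Real.sqrt (x*(x-a)))
          + 1/((M:ℝ)+1) * (Real.sqrt (1-a-ε) * b ^ ((↑(M+1):ℝ) - 1/2) * f b
              - ∫ x in (0:ℝ)..b, x^(M+1) * Real.sqrt ((x-a)/x) * deriv f x) := by
    intro M
    have h1 := hkey M
    rw [hconv, hconv, hconv, hQconv M, hbound M]
    have hM1 : ((M:ℝ)+1) ≠ 0 := by positivity
    have hM2 : (2*(M:ℝ)+2) ≠ 0 := by positivity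
    rw [Real.sqrt_mul hb0.le (b-a)] at h1 ⊢
    field_simp
    linear_combination 2 * h1
  -- main induction
  intro N
  induction N with
  | zero =>
    have he : Finset.Icc 1 0 = (∅ : Finset ℕ) := rfl
    rw [he]
    simp
  | succ N ih =>
    rw [Finset.sum_Icc_succ_top (by omega : 1 ≤ N+1), hrec N, ih]
    have hC1pos : (0:ℝ) < (Nat.choose (2*(N+1)) (N+1) : ℝ) := by
      exact_mod_cast Nat.choose_pos (by omega)
    have hC0pos : (0:ℝ) < (Nat.choose (2*N) N : ℝ) := by
      exact_mod_cast Nat.choose_pos (by omega)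
    have hcN : ((N:ℝ)+1) * (Nat.choose (2*(N+1)) (N+1) : ℝ)
        = 2*(2*(N:ℝ)+1) * (Nat.choose (2*N) N : ℝ) := by
      have h' : (N+1) * ((2*(N+1)).choose (N+1)) = 2*(2*N+1) * ((2*N).choose N) := by
        simpa [Nat.centralBinom] using Nat.succ_mul_centralBinom_succ N
      exact_mod_cast h'
    have ha4 : a ≠ 0 := ne_of_lt ha
    have hfact1 : (a/4)^(N+1) * (Nat.choose (2*(N+1)) (N+1) : ℝ)
        = a*(2*(N:ℝ)+1)/(2*(N:ℝ)+2) * ((a/4)^N * (Nat.choose (2*N) N : ℝ)) := by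
      have hM2 : (2*(N:ℝ)+2) ≠ 0 := by positivity
      rw [div_mul_eq_mul_div, eq_div_iff hM2]
      linear_combination ((a/4)^N * (a/4) * 2) * hcN
    have hfact2 : (a/4)^(N+1) * (Nat.choose (2*(N+1)) (N+1) : ℝ)
        * ((4/a)^(N+1) / ((↑(N+1):ℝ) * (Nat.choose (2*(N+1)) (N+1) : ℝ)))
        = 1/((N:ℝ)+1) := by
      have hN1 : ((N+1:ℕ):ℝ) ≠ 0 := by positivity
      have hp : (a/4)^(N+1) * (4/a)^(N+1) = 1 := by
        rw [← mul_pow]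
        rw [div_mul_div_comm]
        rw [mul_comm a 4]
        rw [div_self (by norm_num [ha4] : (4:ℝ)*a ≠ 0)]
        exact one_pow _
      rw [← mul_div_assoc]
      have hnum : (a/4)^(N+1) * (Nat.choose (2*(N+1)) (N+1) : ℝ) * (4/a)^(N+1)
          = (Nat.choose (2*(N+1)) (N+1) : ℝ) := by
        linear_combination ((Nat.choose (2*(N+1)) (N+1) : ℝ)) * hp
      have hd1 : ((↑(N+1):ℝ) * (Nat.choose (2*(N+1)) (N+1) : ℝ)) ≠ 0 :=
        (mul_pos (by exact_mod_cast Nat.succ_pos N) hC1pos).ne'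
      have hd2 : ((N:ℝ)+1) ≠ 0 := by positivity
      rw [hnum, div_eq_div_iff hd1 hd2]
      push_cast
      ring
    linear_combination
      (-((∫ x in (0:ℝ)..b, f x / Real.sqrt (x*(x-a)))
        + ∑ i ∈ Finset.Icc 1 N,
            ((4 / a) ^ i / ((i : ℝ) * (Nat.choose (2 * i) i : ℝ))) *
              (Real.sqrt (1 - a - ε) * b ^ ((i : ℝ) - 1 / 2) * f b -
                ∫ x in (0:ℝ)..b, x ^ i * Real.sqrt ((x - a) / x) * deriv f x))) * hfact1
      - (Real.sqrt (1-a-ε) * b ^ ((↑(N+1):ℝ) - 1/2) * f b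
          - ∫ x in (0:ℝ)..b, x^(N+1) * Real.sqrt ((x-a)/x) * deriv f x) * hfact2
end

section
/- Let a < 0 and let f : (0,1) → ℝ be continuously differentiable. Fix ε ∈ (0,1) and assume that x ↦ f(x) and x ↦ x^{3/2}·√(x−a)·f′(x) are Lebesgue integrable on (0, 1−ε). Then for every natural number N: ∫_0^{1−ε} x^N·√(x/(x−a))·f(x) dx = (1/2)·(a/4)^N·C(2(N+1),N+1) · ( ∫_0^{1−ε} √(x/(x−a))·f(x) dx + Σ_{i=1}^{N} ( (4/a)^i / ((2i+1)·C(2i,i)) ) · ( √(1−a−ε)·(1−ε)^{i+1/2}·f(1−ε) − ∫_0^{1−ε} x^i·√(x·(x−a))·f′(x) dx ) ). -/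
open Real MeasureTheory intervalIntegral Set Filter

lemma SMx (a x : ℝ) (hx : 0 < x) (hxa : 0 < x - a) :
    Real.sqrt (x/(x-a)) * Real.sqrt (x*(x-a)) = x := by
  rw [← Real.sqrt_mul (by positivity)]
  rw [show x/(x-a) * (x*(x-a)) = x^2 by field_simp]
  exact Real.sqrt_sq hx.le

lemma hasDeriv_M (a x : ℝ) (hx : 0 < x) (hxa : 0 < x - a) :
    HasDerivAt (fun y => Real.sqrt (y*(y-a))) ((2*x - a)/(2*Real.sqrt (x*(x-a)))) x := by
  have h : HasDerivAt (fun y : ℝ => y*(y-a)) (2*x - a) x := by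
    have h1 := ((hasDerivAt_id x).mul ((hasDerivAt_id x).sub_const a))
    refine h1.congr_deriv ?_
    simp only [id_eq]; ring
  have h2 := h.sqrt (by positivity)
  convert h2 using 1

lemma hasDeriv_G (a : ℝ) (f : ℝ → ℝ) (j : ℕ) (x : ℝ) (hx : 0 < x) (hxa : 0 < x - a)
    (hf : DifferentiableAt ℝ f x) :
    HasDerivAt (fun y => y^(j+1) * Real.sqrt (y*(y-a)) * f y)
      ( ((j:ℝ)+2) * (x^(j+1) * Real.sqrt (x/(x-a)) * f x)
         - a*(2*(j:ℝ)+3)/2 * (x^j * Real.sqrt (x/(x-a)) * f x)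
        + x^(j+1) * Real.sqrt (x*(x-a)) * deriv f x) x := by
  set M := Real.sqrt (x*(x-a)) with hMdef
  set S := Real.sqrt (x/(x-a)) with hSdef
  have hM0 : M ≠ 0 := by rw [hMdef]; positivity
  have hM2 : M * M = x*(x-a) := Real.mul_self_sqrt (by positivity)
  have hSM : S * M = x := SMx a x hx hxa
  have hp : HasDerivAt (fun y : ℝ => y^(j+1)) ((↑(j+1)) * x^j) x := by
    simpa using hasDerivAt_pow (j+1) x
  have hg := (hp.mul (hasDeriv_M a x hx hxa)).mul hf.hasDerivAt
  refine hg.congr_deriv ?_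
  have hco : (↑(j+1) : ℝ) * x^j * M + x^(j+1) * ((2*x - a)/(2*M))
      = ((j:ℝ)+2) * (x^(j+1) * S) - a*(2*(j:ℝ)+3)/2 * (x^j * S) := by
    apply mul_right_cancel₀ hM0
    have h2 : (2*x - a)/(2*M) * M = (2*x - a)/2 := by field_simp
    push_cast
    linear_combination (x^(j+1)) * h2 + (((j:ℝ)+1)*x^j) * hM2
      + (a*(2*(j:ℝ)+3)/2*x^j - ((j:ℝ)+2)*x^(j+1)) * hSM
  push_cast at hco ⊢
  simp only [Pi.mul_apply]
  linear_combination (f x) * hco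

lemma key_ibp (a : ℝ) (ha : a < 0) (f : ℝ → ℝ) (b : ℝ) (hb0 : 0 < b) (hb1 : b < 1)
    (hdiff : ∀ t ∈ Set.Ioo (0:ℝ) 1, DifferentiableAt ℝ f t)
    (hcont : ContinuousOn (deriv f) (Set.Ioo 0 1))
    (hint1 : IntegrableOn f (Set.Ioo 0 b))
    (hint2 : IntegrableOn (fun x => x ^ ((3:ℝ)/2) * Real.sqrt (x - a) * deriv f x)
      (Set.Ioo 0 b)) (j : ℕ) :
      ((j:ℝ)+2) * (∫ x in (0:ℝ)..b, x^(j+1) * Real.sqrt (x/(x-a)) * f x)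
        - a*(2*(j:ℝ)+3)/2 * (∫ x in (0:ℝ)..b, x^j * Real.sqrt (x/(x-a)) * f x)
        + (∫ x in (0:ℝ)..b, x^(j+1) * Real.sqrt (x*(x-a)) * deriv f x)
      = b^(j+1) * Real.sqrt (b*(b-a)) * f b := by
  -- continuity of sqrt factors
  have hSc : ContinuousOn (fun x : ℝ => Real.sqrt (x/(x-a))) (Set.Ioo 0 b) := by
    apply Real.continuous_sqrt.comp_continuousOn
    apply ContinuousOn.div continuousOn_id (continuousOn_id.sub continuousOn_const)
    intro x hx
    have h1 := hx.1
    intro h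
    simp only [Pi.sub_apply, id_eq] at h
    nlinarith
  have hMc : ContinuousOn (fun x : ℝ => Real.sqrt (x*(x-a))) (Set.Ioo 0 b) := by
    apply Real.continuous_sqrt.comp_continuousOn
    exact continuousOn_id.mul (continuousOn_id.sub continuousOn_const)
  -- integrability of the I-type integrands
  have intI : ∀ i : ℕ, IntegrableOn (fun x => x^i * Real.sqrt (x/(x-a)) * f x)
      (Set.Ioo 0 b) := by
    intro i
    apply Integrable.mono' hint1.norm
    · exact (((continuous_pow i).continuousOn.mul hSc).aestronglyMeasurable
        measurableSet_Ioo).mul hint1.aestronglyMeasurable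
    · rw [ae_restrict_iff' measurableSet_Ioo]
      filter_upwards with x hx
      have hx0 : 0 < x := hx.1
      have hxb : x < b := hx.2
      have h1 : x^i ≤ 1 := pow_le_one₀ hx0.le (by linarith)
      have h2 : Real.sqrt (x/(x-a)) ≤ 1 := by
        rw [show (1:ℝ) = Real.sqrt 1 by simp]
        apply Real.sqrt_le_sqrt
        rw [div_le_one (by linarith)]; linarith
      have h3 : 0 ≤ Real.sqrt (x/(x-a)) := Real.sqrt_nonneg _
      calc ‖x^i * Real.sqrt (x/(x-a)) * f x‖
          = (x^i * Real.sqrt (x/(x-a))) * ‖f x‖ := by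
            rw [norm_mul]; congr 1
            rw [Real.norm_eq_abs, abs_of_nonneg (by positivity)]
        _ ≤ 1 * ‖f x‖ := by
            apply mul_le_mul_of_nonneg_right _ (norm_nonneg _)
            nlinarith [pow_nonneg hx0.le i]
        _ = ‖f x‖ := one_mul _
  -- integrability of the J-type integrands
  have intJ : ∀ j : ℕ, IntegrableOn (fun x => x^(j+1) * Real.sqrt (x*(x-a)) * deriv f x)
      (Set.Ioo 0 b) := by
    intro j
    have hbase : IntegrableOn
        (fun x => x^j * (x ^ ((3:ℝ)/2) * Real.sqrt (x - a) * deriv f x)) (Set.Ioo 0 b) := by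
      apply Integrable.mono' hint2.norm
      · exact ((continuous_pow j).continuousOn.aestronglyMeasurable
          measurableSet_Ioo).mul hint2.aestronglyMeasurable
      · rw [ae_restrict_iff' measurableSet_Ioo]
        filter_upwards with x hx
        rw [norm_mul]
        have h1 : ‖x^j‖ ≤ 1 := by
          rw [Real.norm_eq_abs, abs_of_nonneg (pow_nonneg hx.1.le j)]
          exact pow_le_one₀ hx.1.le (by linarith [hx.2])
        nlinarith [norm_nonneg (x ^ ((3:ℝ)/2) * Real.sqrt (x - a) * deriv f x)]
    apply hbase.congr_fun _ measurableSet_Ioo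
    intro x hx
    have hx0 : 0 < x := hx.1
    have h32 : x ^ ((3:ℝ)/2) = x * Real.sqrt x := by
      rw [show (3:ℝ)/2 = 1 + 1/2 by norm_num, Real.rpow_add hx0, Real.rpow_one,
        ← Real.sqrt_eq_rpow]
    show x ^ j * (x ^ ((3:ℝ)/2) * Real.sqrt (x - a) * deriv f x)
      = x ^ (j + 1) * Real.sqrt (x*(x-a)) * deriv f x
    rw [h32, Real.sqrt_mul hx0.le]
    ring
  -- the integrand of the derivative
  set D : ℝ → ℝ := fun x =>
    ((j:ℝ)+2) * (x^(j+1) * Real.sqrt (x/(x-a)) * f x)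
      - a*(2*(j:ℝ)+3)/2 * (x^j * Real.sqrt (x/(x-a)) * f x)
      + x^(j+1) * Real.sqrt (x*(x-a)) * deriv f x with hD
  have intD : ∀ k : ℕ, IntegrableOn (fun x =>
      ((k:ℝ)+2) * (x^(k+1) * Real.sqrt (x/(x-a)) * f x)
      - a*(2*(k:ℝ)+3)/2 * (x^k * Real.sqrt (x/(x-a)) * f x)
      + x^(k+1) * Real.sqrt (x*(x-a)) * deriv f x) (Set.Ioo 0 b) := fun k =>
    (((intI (k+1)).const_mul _).sub ((intI k).const_mul _)).add (intJ k)
  -- interval integrability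
  have hIocIoo : ∀ g : ℝ → ℝ, IntegrableOn g (Set.Ioo 0 b) →
      IntervalIntegrable g volume 0 b := by
    intro g hg
    rw [intervalIntegrable_iff_integrableOn_Ioc_of_le hb0.le]
    exact hg.congr_set_ae Ioo_ae_eq_Ioc.symm
  -- FTC on [δ, b], G k is the antiderivative
  set G : ℕ → ℝ → ℝ := fun k x => x^(k+1) * Real.sqrt (x*(x-a)) * f x with hG
  have hT : ∀ k : ℕ, Tendsto (G k) (nhdsWithin 0 (Set.Ioi 0))
      (nhds (G k b - ∫ x in (0:ℝ)..b, (fun x =>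
        ((k:ℝ)+2) * (x^(k+1) * Real.sqrt (x/(x-a)) * f x)
        - a*(2*(k:ℝ)+3)/2 * (x^k * Real.sqrt (x/(x-a)) * f x)
        + x^(k+1) * Real.sqrt (x*(x-a)) * deriv f x) x)) := by
    intro k
    set Dk : ℝ → ℝ := fun x =>
        ((k:ℝ)+2) * (x^(k+1) * Real.sqrt (x/(x-a)) * f x)
        - a*(2*(k:ℝ)+3)/2 * (x^k * Real.sqrt (x/(x-a)) * f x)
        + x^(k+1) * Real.sqrt (x*(x-a)) * deriv f x with hDk
    have hTc : ContinuousOn (fun u => ∫ x in u..b, Dk x) (Set.uIcc 0 b) := by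
      apply continuousOn_primitive_interval_left
      rw [uIcc_of_le hb0.le]
      exact (intD k).congr_set_ae Ioo_ae_eq_Icc.symm
    have hT0 : Tendsto (fun u => ∫ x in u..b, Dk x) (nhdsWithin 0 (Set.Ioi 0))
        (nhds (∫ x in (0:ℝ)..b, Dk x)) := by
      have h1 := hTc 0 (by rw [uIcc_of_le hb0.le]; exact ⟨le_refl 0, hb0.le⟩)
      rw [← nhdsWithin_Ioc_eq_nhdsGT hb0]
      apply h1.mono_left
      apply nhdsWithin_mono
      rw [uIcc_of_le hb0.le]
      exact Set.Ioc_subset_Icc_self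
    have hGeq : ∀ᶠ δ in nhdsWithin 0 (Set.Ioi 0),
        G k δ = G k b - ∫ x in δ..b, Dk x := by
      filter_upwards [Ioo_mem_nhdsGT_of_mem (Set.mem_Ico.mpr ⟨le_refl (0:ℝ), hb0⟩)]
      intro δ hδ
      have hsub : Set.uIcc δ b ⊆ Set.Ioo 0 1 := by
        rw [uIcc_of_le hδ.2.le]
        intro x hx
        exact ⟨lt_of_lt_of_le hδ.1 hx.1, lt_of_le_of_lt hx.2 hb1⟩
      have hDi : ∀ x ∈ Set.uIcc δ b, HasDerivAt (G k) (Dk x) x := by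
        intro x hx
        have hx01 := hsub hx
        have h := hasDeriv_G a f k x hx01.1 (by linarith [hx01.1]) (hdiff x hx01)
        exact h
      have hDC : ContinuousOn Dk (Set.uIcc δ b) := by
        have hfc : ContinuousOn f (Set.uIcc δ b) := fun x hx =>
          ((hdiff x (hsub hx)).continuousAt).continuousWithinAt
        have hfc' : ContinuousOn (deriv f) (Set.uIcc δ b) := hcont.mono hsub
        have hS : ContinuousOn (fun x : ℝ => Real.sqrt (x/(x-a))) (Set.uIcc δ b) := by
          apply Real.continuous_sqrt.comp_continuousOn
          apply ContinuousOn.div continuousOn_id (continuousOn_id.sub continuousOn_const)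
          intro x hx
          have h1 := (hsub hx).1
          intro h
          simp only [Pi.sub_apply, id_eq] at h
          nlinarith
        have hM : ContinuousOn (fun x : ℝ => Real.sqrt (x*(x-a))) (Set.uIcc δ b) :=
          Real.continuous_sqrt.comp_continuousOn
            (continuousOn_id.mul (continuousOn_id.sub continuousOn_const))
        exact ((continuousOn_const.mul (((continuous_pow (k+1)).continuousOn.mul hS).mul hfc)).sub
          (continuousOn_const.mul (((continuous_pow k).continuousOn.mul hS).mul hfc))).add
          (((continuous_pow (k+1)).continuousOn.mul hM).mul hfc')
      have hFTC := intervalIntegral.integral_eq_sub_of_hasDerivAt hDi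
        (hDC.intervalIntegrable)
      rw [hFTC]; ring
    have hsub0 : Tendsto (fun u => G k b - ∫ x in u..b, Dk x) (nhdsWithin 0 (Set.Ioi 0))
        (nhds (G k b - ∫ x in (0:ℝ)..b, Dk x)) := tendsto_const_nhds.sub hT0
    have hGeq' : G k =ᶠ[nhdsWithin 0 (Set.Ioi 0)]
        (fun δ => G k b - ∫ x in δ..b, Dk x) := hGeq
    exact Tendsto.congr' hGeq'.symm hsub0
  -- any limit of G 0 at 0+ must be 0
  have hL : ∀ L : ℝ, Tendsto (G 0) (nhdsWithin 0 (Set.Ioi 0)) (nhds L) → L = 0 := by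
    intro L hGL
    by_contra hL0
    have hpos : 0 < |L| := abs_pos.mpr hL0
    have habs : Tendsto (fun δ => |G 0 δ|) (nhdsWithin 0 (Set.Ioi 0)) (nhds |L|) := hGL.abs
    have hev : ∀ᶠ x in nhdsWithin 0 (Set.Ioi 0), |L|/2 ≤ |G 0 x| :=
      Filter.Tendsto.eventually_const_le (by linarith) habs
    have hev2 : Set.Ioo (0:ℝ) b ∈ nhdsWithin 0 (Set.Ioi 0) :=
      Ioo_mem_nhdsGT_of_mem (Set.mem_Ico.mpr ⟨le_refl (0:ℝ), hb0⟩)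
    have hev3 : ∀ᶠ x in nhdsWithin 0 (Set.Ioi 0),
        |L|/2 ≤ |G 0 x| ∧ x ∈ Set.Ioo 0 b := hev.and (eventually_of_mem hev2 (fun x hx => hx))
    obtain ⟨η, hη, hsub2⟩ := mem_nhdsGT_iff_exists_Ioo_subset.1 hev3
    set c := min η b with hc
    have hc0 : 0 < c := lt_min hη hb0
    have hcb : c ≤ b := min_le_right _ _
    have hcη : c ≤ η := min_le_left _ _
    have hca : 0 < c - a := by linarith
    set K := Real.sqrt (c*(c-a)) with hK
    have hKpos : 0 < K := Real.sqrt_pos.mpr (by positivity)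
    have hBnd : ∀ x ∈ Set.Ioo (0:ℝ) c, ‖x⁻¹‖ ≤ 2*K/|L| * ‖f x‖ := by
      intro x hx
      obtain ⟨hge, hmem⟩ := hsub2 ⟨hx.1, lt_of_lt_of_le hx.2 hcη⟩
      have hx0 : 0 < x := hx.1
      have hxa : 0 < x - a := by linarith
      have e : |G 0 x| = x * Real.sqrt (x*(x-a)) * |f x| := by
        rw [hG]
        simp only [pow_one, zero_add]
        rw [abs_mul, abs_mul, abs_of_nonneg hx0.le, abs_of_nonneg (Real.sqrt_nonneg _)]
      have hMle : Real.sqrt (x*(x-a)) ≤ K := by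
        apply Real.sqrt_le_sqrt
        have h1 : x ≤ c := hx.2.le
        nlinarith
      have hkey : |L|/2 ≤ x * K * |f x| := by
        rw [e] at hge
        have := mul_le_mul_of_nonneg_right
          (mul_le_mul_of_nonneg_left hMle hx0.le) (abs_nonneg (f x))
        linarith
      have h3 := mul_le_mul_of_nonneg_left hkey
        (le_of_lt (by positivity : (0:ℝ) < 2/|L|))
      have h4 : (2/|L|)*(|L|/2) = 1 := by field_simp
      rw [h4] at h3
      rw [Real.norm_eq_abs, abs_of_nonneg (inv_nonneg.mpr hx0.le), Real.norm_eq_abs,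
        inv_eq_one_div, div_le_iff₀ hx0]
      have h5 : 2*K/|L| * |f x| * x = 2/|L| * (x*K*|f x|) := by ring
      rw [h5]
      linarith
    have hint_inv : IntegrableOn (fun x : ℝ => x⁻¹) (Set.Ioo 0 c) := by
      apply Integrable.mono'
        (Integrable.const_mul ((hint1.mono_set (Set.Ioo_subset_Ioo le_rfl hcb)).norm) (2*K/|L|))
      · exact measurable_inv.aestronglyMeasurable
      · rw [ae_restrict_iff' measurableSet_Ioo]
        filter_upwards with x hx
        exact hBnd x hx
    have hii : IntervalIntegrable (fun x : ℝ => x⁻¹) volume 0 c := by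
      rw [intervalIntegrable_iff_integrableOn_Ioc_of_le hc0.le]
      exact hint_inv.congr_set_ae Ioo_ae_eq_Ioc.symm
    have hnot : ¬ IntervalIntegrable (fun x : ℝ => (x - 0)⁻¹) volume 0 c := by
      rw [intervalIntegrable_sub_inv_iff]
      push_neg
      exact ⟨hc0.ne, Set.left_mem_uIcc⟩
    exact hnot (by simpa using hii)
  -- hence G 0 tends to 0
  have hG0 : Tendsto (G 0) (nhdsWithin 0 (Set.Ioi 0)) (nhds 0) := by
    have h := hT 0
    rwa [hL _ h] at h
  -- hence each G k tends to 0, and so each integral identity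
  have hkey : ∀ k : ℕ, (∫ x in (0:ℝ)..b, (fun x =>
        ((k:ℝ)+2) * (x^(k+1) * Real.sqrt (x/(x-a)) * f x)
        - a*(2*(k:ℝ)+3)/2 * (x^k * Real.sqrt (x/(x-a)) * f x)
        + x^(k+1) * Real.sqrt (x*(x-a)) * deriv f x) x) = G k b := by
    intro k
    have hGk : Tendsto (G k) (nhdsWithin 0 (Set.Ioi 0)) (nhds 0) := by
      have heq : G k = fun δ => δ^k * G 0 δ := by
        funext δ; rw [hG]; ring
      rw [heq]
      have h1 : Tendsto (fun δ : ℝ => δ^k) (nhdsWithin 0 (Set.Ioi 0)) (nhds (0^k)) :=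
        ((continuous_pow k).tendsto 0).mono_left nhdsWithin_le_nhds
      have := h1.mul hG0
      simpa using this
    have := tendsto_nhds_unique (hT k) hGk
    linarith [this]
  -- split the integral
  have h1 := hIocIoo _ (intI (j+1))
  have h2 := hIocIoo _ (intI j)
  have h3 := hIocIoo _ (intJ j)
  have hsplit := hkey j
  rw [intervalIntegral.integral_add ((h1.const_mul _).sub (h2.const_mul _)) h3,
    intervalIntegral.integral_sub (h1.const_mul _) (h2.const_mul _),
    intervalIntegral.integral_const_mul, intervalIntegral.integral_const_mul] at hsplit
  rw [hG] at hsplit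
  linarith [hsplit]

/-- Lemma 6.4 (Transform3a): for `a < 0`, `f` continuously differentiable on
`(0,1)`, `ε ∈ (0,1)` with the stated integrability, and every `N ∈ ℕ`,
`∫_0^{1-ε} x^N·√(x/(x-a))·f(x) dx = (1/2)·(a/4)^N·C(2(N+1),N+1) ·
  ( ∫_0^{1-ε} √(x/(x-a))·f(x) dx
    + Σ_{i=1}^N ((4/a)^i/((2i+1)·C(2i,i)))·( √(1-a-ε)·(1-ε)^{i+1/2}·f(1-ε)
        - ∫_0^{1-ε} x^i·√(x(x-a))·f'(x) dx ) )`. -/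
theorem stmt_16 (a : ℝ) (ha : a < 0) (f : ℝ → ℝ)
    (hdiff : ∀ t ∈ Set.Ioo (0 : ℝ) 1, DifferentiableAt ℝ f t)
    (hcont : ContinuousOn (deriv f) (Set.Ioo 0 1))
    (ε : ℝ) (hε0 : 0 < ε) (hε1 : ε < 1)
    (hint1 : MeasureTheory.IntegrableOn f (Set.Ioo 0 (1 - ε)))
    (hint2 : MeasureTheory.IntegrableOn
      (fun x => x ^ ((3 : ℝ) / 2) * Real.sqrt (x - a) * deriv f x)
      (Set.Ioo 0 (1 - ε))) :
    ∀ N : ℕ,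
      (∫ x in (0 : ℝ)..(1 - ε), x ^ N * Real.sqrt (x / (x - a)) * f x) =
        (1 / 2) * (a / 4) ^ N * (Nat.choose (2 * (N + 1)) (N + 1) : ℝ) *
          ((∫ x in (0 : ℝ)..(1 - ε), Real.sqrt (x / (x - a)) * f x) +
            ∑ i ∈ Finset.Icc 1 N,
              ((4 / a) ^ i / ((2 * (i : ℝ) + 1) * (Nat.choose (2 * i) i : ℝ))) *
                (Real.sqrt (1 - a - ε) * (1 - ε) ^ ((i : ℝ) + 1 / 2) * f (1 - ε) -
                  ∫ x in (0 : ℝ)..(1 - ε),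
                    x ^ i * Real.sqrt (x * (x - a)) * deriv f x)) := by
  have key := key_ibp a ha f (1 - ε) (by linarith) (by linarith) hdiff hcont hint1 hint2
  have ha0 : a ≠ 0 := ne_of_lt ha
  have hB : ∀ i : ℕ, ((1:ℝ)-ε)^i * Real.sqrt ((1-ε)*((1-ε)-a)) * f (1-ε)
      = Real.sqrt (1-a-ε) * (1-ε) ^ ((i:ℝ) + 1/2) * f (1-ε) := by
    intro i
    have h1 : Real.sqrt ((1-ε)*((1-ε)-a)) = Real.sqrt (1-ε) * Real.sqrt (1-a-ε) := by
      rw [Real.sqrt_mul (by linarith), show (1-ε)-a = 1-a-ε by ring]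
    have h2 : ((1:ℝ)-ε)^((i:ℝ)+1/2) = (1-ε)^i * Real.sqrt (1-ε) := by
      rw [Real.rpow_add (by linarith), Real.rpow_natCast, ← Real.sqrt_eq_rpow]
    rw [h1, h2]; ring
  intro N
  induction N with
  | zero =>
      have he : Finset.Icc 1 0 = (∅ : Finset ℕ) := rfl
      simp only [he, Finset.sum_empty, add_zero, pow_zero, one_mul]
      norm_num
  | succ N ih =>
      have hkeyN := key N
      rw [hB (N+1)] at hkeyN
      rw [ih] at hkeyN
      rw [show Finset.Icc 1 (N+1) = insert (N+1) (Finset.Icc 1 N) from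
        (Finset.insert_Icc_right_eq_Icc_add_one (by omega)).symm,
        Finset.sum_insert (by simp)]
      have hCB' : ((N:ℝ)+2) * ((Nat.choose (2*(N+1+1)) (N+1+1)):ℝ)
          = 2*(2*(N:ℝ)+3) * ((Nat.choose (2*(N+1)) (N+1)):ℝ) := by
        have h := Nat.succ_mul_centralBinom_succ (N+1)
        simp only [Nat.centralBinom] at h
        have h2 : ((N+2) * Nat.choose (2*(N+1+1)) (N+1+1) : ℕ)
            = 2*(2*N+3) * Nat.choose (2*(N+1)) (N+1) := by
          rw [show N+2 = N+1+1 by ring, show 2*N+3 = 2*(N+1)+1 by ring]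
          exact h
        exact_mod_cast h2
      have hpow : (a/4 : ℝ)^(N+1) * (4/a)^(N+1) = 1 := by
        rw [← mul_pow, show (a/4) * (4/a) = 1 by field_simp, one_pow]
      have hCB1 : (0:ℝ) < ((Nat.choose (2*(N+1)) (N+1)):ℝ) := by
        exact_mod_cast Nat.centralBinom_pos (N+1)
      have hodd : (2*((N+1:ℕ):ℝ)+1) ≠ 0 := by push_cast; positivity
      set I1 := ∫ x in (0:ℝ)..(1-ε), x ^ (N+1) * Real.sqrt (x/(x-a)) * f x with hI1
      set IS := ∫ x in (0:ℝ)..(1-ε), Real.sqrt (x/(x-a)) * f x with hIS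
      set Jt := ∫ x in (0:ℝ)..(1-ε), x ^ (N+1) * Real.sqrt (x*(x-a)) * deriv f x with hJt
      set Bt := Real.sqrt (1-a-ε) * (1-ε) ^ (((N+1:ℕ):ℝ) + 1/2) * f (1-ε) with hBt
      set s := ∑ i ∈ Finset.Icc 1 N,
        ((4/a)^i / ((2*(i:ℝ)+1) * ((Nat.choose (2*i) i):ℝ))) *
          (Real.sqrt (1-a-ε) * (1-ε) ^ ((i:ℝ) + 1/2) * f (1-ε) -
            ∫ x in (0:ℝ)..(1-ε), x ^ i * Real.sqrt (x*(x-a)) * deriv f x) with hs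
      set CB1 := ((Nat.choose (2*(N+1)) (N+1)):ℝ) with hCB1d
      set CB2 := ((Nat.choose (2*(N+1+1)) (N+1+1)):ℝ) with hCB2d
      have h14 : ((1:ℝ)/4)^N * 4^N = 1 := by
        rw [← mul_pow]; norm_num
      rw [show Bt - Jt = ((N:ℝ)+2)*I1 - (2*(N:ℝ)+3)*(a/4)^(N+1)*CB1*(IS+s) by
        linear_combination (-1:ℝ)*hkeyN]
      have hinv : (4/a)^(N+1)/((2*((N+1:ℕ):ℝ)+1)*CB1) * ((2*(N:ℝ)+3)*CB1) = (4/a)^(N+1) := by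
        rw [div_mul_eq_mul_div, div_eq_iff (mul_ne_zero hodd hCB1.ne')]; push_cast; ring
      linear_combination (-1/2*(a/4)^(N+1)*((4/a)^(N+1)/((2*((N+1:ℕ):ℝ)+1)*CB1))*I1) * hCB'
        + (-(a/4)^(N+1)*I1 + 1/2*((a/4)^(N+1))^2*CB2*(IS+s)) * hinv
        + (-I1 + 1/2*(a/4)^(N+1)*CB2*(IS+s)) * hpow
end
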